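/- Let T be a finite plane tree with maximal arity m, and for each non-root node u with root-to-u path u_1, ..., u_{d(u)} (where d(u) is the depth of u and c(v) ∈ {1,...,m} is the position of v among its siblings counted from right to left), define x_u = d(u) + Σ_{i=1}^{d(u)} c(u_i) (m+2)^{-i}. Then the map u ↦ x_u is injective on non-root nodes of T. -/

import Mathlib

inductive PlaneTree where
  | node : List PlaneTree → PlaneTree

namespace PlaneTree

def childrenOf : PlaneTree → List PlaneTree
  | .node cs => cs

def numNodes : PlaneTree → ℕ
  | .node cs => 1 + (cs.attach.map (fun c => numNodes c.1)).sum
decreasing_by have := List.sizeOf_lt_of_mem c.2; simp only [PlaneTree.node.sizeOf_spec]; omega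

/-- maximal number of children of a node of the tree -/
def maxArity : PlaneTree → ℕ
  | .node cs => max cs.length ((cs.attach.map (fun c => maxArity c.1)).foldr max 0)
decreasing_by have := List.sizeOf_lt_of_mem c.2; simp only [PlaneTree.node.sizeOf_spec]; omega

/-- the subtree rooted at the node reached by following the path `p` of
(0-based, left-to-right) child indices from the root, if it exists. -/
def subtreeAt : PlaneTree → List ℕ → Option PlaneTree
  | t, [] => some t
  | t, i :: p =>
    match (childrenOf t)[i]? with
    | some c => subtreeAt c p
    | none => none

/-- `p` is a valid path to a node of `t` (the root is `[]`); the depth of the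
corresponding node is `p.length`. -/
def IsNode (t : PlaneTree) (p : List ℕ) : Prop := (t.subtreeAt p).isSome

/-- number of children of the node at path `p` (0 if the path is invalid). -/
def arityAt (t : PlaneTree) (p : List ℕ) : ℕ :=
  ((t.subtreeAt p).map (fun s => s.childrenOf.length)).getD 0

/-- `c(u_{i+1})`: the sibling index, counted from right to left starting at 1,
of the node at depth `i+1` on the path `p`. -/
def cAt (t : PlaneTree) (p : List ℕ) (i : ℕ) : ℕ :=
  arityAt t (p.take i) - p.getD i 0

/-- `x_u = d(u) + Σ_{i=1}^{d(u)} c(u_i) (m+2)^{-i}` for the node `u` at path `p`,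
where `m` is the maximal arity of `t`. -/
noncomputable def xVal (t : PlaneTree) (p : List ℕ) : ℝ :=
  (p.length : ℝ) + ∑ i ∈ Finset.range p.length,
    (cAt t p i : ℝ) * ((maxArity t : ℝ) + 2) ^ (-(i + 1 : ℤ))

end PlaneTree

open PlaneTree

lemma subtreeAt_append (t : PlaneTree) (a b : List ℕ) :
    subtreeAt t (a ++ b) = (subtreeAt t a).bind (fun s => s.subtreeAt b) := by
  induction a generalizing t with
  | nil => simp [subtreeAt]
  | cons i a ih =>
    simp only [List.cons_append, subtreeAt]
    cases (childrenOf t)[i]? with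
    | none => simp
    | some c => simp [ih]

lemma isNode_take {t : PlaneTree} {p : List ℕ} (hp : IsNode t p) (i : ℕ) :
    IsNode t (p.take i) := by
  unfold IsNode at *
  rw [← List.take_append_drop i p, subtreeAt_append] at hp
  cases h : subtreeAt t (p.take i) with
  | none => rw [h] at hp; simp at hp
  | some s => simp

lemma le_foldr_max {a : ℕ} {l : List ℕ} (h : a ∈ l) : a ≤ l.foldr max 0 := by
  induction l with
  | nil => simp at h
  | cons x l ih =>
    rcases List.mem_cons.1 h with rfl | h
    · exact le_max_left _ _
    · exact le_trans (ih h) (le_max_right _ _)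

lemma maxArity_child {t c : PlaneTree} (h : c ∈ childrenOf t) :
    maxArity c ≤ maxArity t := by
  cases t with
  | node cs =>
    rw [maxArity]
    refine le_trans ?_ (le_max_right _ _)
    apply le_foldr_max
    simp only [List.mem_map, List.mem_attach]
    exact ⟨⟨c, h⟩, trivial, rfl⟩

lemma maxArity_subtree {t s : PlaneTree} {p : List ℕ} (h : subtreeAt t p = some s) :
    maxArity s ≤ maxArity t := by
  induction p generalizing t with
  | nil => rw [subtreeAt, Option.some_inj] at h; subst h; exact le_refl _
  | cons i p ih =>
    rw [subtreeAt] at h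
    cases hc : (childrenOf t)[i]? with
    | none => rw [hc] at h; simp at h
    | some c =>
      rw [hc] at h
      exact le_trans (ih h) (maxArity_child (List.mem_of_getElem? hc))

lemma arityAt_le_maxArity {t : PlaneTree} {p : List ℕ} (hp : IsNode t p) :
    arityAt t p ≤ maxArity t := by
  unfold IsNode at hp
  cases h : subtreeAt t p with
  | none => rw [h] at hp; simp at hp
  | some s =>
    rw [arityAt, h]
    simp only [Option.map_some, Option.getD_some]
    refine le_trans ?_ (maxArity_subtree h)
    cases s with
    | node cs => rw [maxArity]; exact le_max_left _ _

lemma getD_lt_arityAt {t : PlaneTree} {p : List ℕ} (hp : IsNode t p) {i : ℕ}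
    (hi : i < p.length) : p.getD i 0 < arityAt t (p.take i) := by
  have h1 : IsNode t (p.take (i+1)) := isNode_take hp (i+1)
  rw [List.take_succ] at h1
  have hgt : p[i]?.toList = [p[i]] := by simp [List.getElem?_eq_getElem hi]
  rw [hgt] at h1
  unfold IsNode at h1
  rw [subtreeAt_append] at h1
  have h2 : IsNode t (p.take i) := isNode_take hp i
  unfold IsNode at h2
  cases hs : subtreeAt t (p.take i) with
  | none => rw [hs] at h2; simp at h2
  | some s =>
    rw [hs] at h1
    simp only [Option.bind_some] at h1
    rw [subtreeAt] at h1
    cases hc : (childrenOf s)[p[i]]? with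
    | none => rw [hc] at h1; simp at h1
    | some c =>
      have hlt : p[i] < (childrenOf s).length := by
        by_contra hcon
        rw [List.getElem?_eq_none (by omega)] at hc
        exact Option.noConfusion rfl (heq_of_eq hc)
      rw [arityAt, hs]
      have hgd : p.getD i 0 = p[i] := List.getD_eq_getElem _ _ hi
      rw [hgd]
      simpa using hlt

lemma sum_digits_lt {b : ℕ} (hb : 0 < b) (n : ℕ) (c : ℕ → ℕ) (hc : ∀ i < n, c i < b) :
    ∑ i ∈ Finset.range n, c i * b ^ (n - 1 - i) < b ^ n := by
  induction n generalizing c with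
  | zero => simp
  | succ n ih =>
    rw [Finset.sum_range_succ']
    have hexp : ∀ i : ℕ, n + 1 - 1 - (i + 1) = n - 1 - i := fun i => by omega
    have hsum : ∀ f : ℕ → ℕ, ∑ x ∈ Finset.range n, f (x + 1) * b ^ (n + 1 - 1 - (x + 1))
        = ∑ x ∈ Finset.range n, f (x + 1) * b ^ (n - 1 - x) := by
      intro f
      refine Finset.sum_congr rfl fun x _ => ?_
      have e : n + 1 - 1 - (x + 1) = n - 1 - x := by omega
      rw [e]
    rw [hsum]
    have hz : n + 1 - 1 - 0 = n := by omega
    rw [hz]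
    have htail : ∑ i ∈ Finset.range n, c (i + 1) * b ^ (n - 1 - i) < b ^ n := by
      simpa using ih (fun i => c (i + 1)) (fun i hi => hc (i + 1) (by omega))
    have h0 : c 0 + 1 ≤ b := hc 0 (by omega)
    have : (c 0 + 1) * b ^ n ≤ b * b ^ n := Nat.mul_le_mul_right _ h0
    rw [pow_succ]
    calc (∑ i ∈ Finset.range n, c (i + 1) * b ^ (n - 1 - i)) + c 0 * b ^ n
        < b ^ n + c 0 * b ^ n := by omega
      _ = (c 0 + 1) * b ^ n := by ring
      _ ≤ b * b ^ n := this
      _ = b ^ n * b := by ring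

lemma digits_eq {b : ℕ} (hb : 0 < b) (n : ℕ) (c d : ℕ → ℕ)
    (hc : ∀ i < n, c i < b) (hd : ∀ i < n, d i < b)
    (h : ∑ i ∈ Finset.range n, c i * b ^ (n - 1 - i)
       = ∑ i ∈ Finset.range n, d i * b ^ (n - 1 - i)) :
    ∀ i < n, c i = d i := by
  induction n generalizing c d with
  | zero => intro i hi; omega
  | succ n ih =>
    rw [Finset.sum_range_succ', Finset.sum_range_succ'] at h
    have hsum : ∀ f : ℕ → ℕ, ∑ x ∈ Finset.range n, f (x + 1) * b ^ (n + 1 - 1 - (x + 1))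
        = ∑ x ∈ Finset.range n, f (x + 1) * b ^ (n - 1 - x) := by
      intro f
      refine Finset.sum_congr rfl fun x _ => ?_
      have e : n + 1 - 1 - (x + 1) = n - 1 - x := by omega
      rw [e]
    have hz : n + 1 - 1 - 0 = n := by omega
    rw [hsum c, hsum d, hz] at h
    have hc' : ∑ i ∈ Finset.range n, c (i + 1) * b ^ (n - 1 - i) < b ^ n := by
      simpa using sum_digits_lt hb n (fun i => c (i + 1)) (fun i hi => hc (i + 1) (by omega))
    have hd' : ∑ i ∈ Finset.range n, d (i + 1) * b ^ (n - 1 - i) < b ^ n := by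
      simpa using sum_digits_lt hb n (fun i => d (i + 1)) (fun i hi => hd (i + 1) (by omega))
    have hbn : 0 < b ^ n := pow_pos hb n
    have h0 : c 0 = d 0 := by
      have e1 : ((∑ i ∈ Finset.range n, c (i + 1) * b ^ (n - 1 - i)) + c 0 * b ^ n) / b ^ n
          = c 0 := by
        rw [Nat.add_mul_div_right _ _ hbn, Nat.div_eq_of_lt hc']; omega
      have e2 : ((∑ i ∈ Finset.range n, d (i + 1) * b ^ (n - 1 - i)) + d 0 * b ^ n) / b ^ n
          = d 0 := by
        rw [Nat.add_mul_div_right _ _ hbn, Nat.div_eq_of_lt hd']; omega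
      rw [← e1, ← e2, h]
    have hm : c 0 * b ^ n = d 0 * b ^ n := by rw [h0]
    have htails : ∑ i ∈ Finset.range n, c (i + 1) * b ^ (n - 1 - i)
        = ∑ i ∈ Finset.range n, d (i + 1) * b ^ (n - 1 - i) := by omega
    have := ih (fun i => c (i + 1)) (fun i => d (i + 1))
      (fun i hi => hc (i + 1) (by omega)) (fun i hi => hd (i + 1) (by omega)) htails
    intro i hi
    cases i with
    | zero => exact h0
    | succ i => exact this i (by omega)

lemma sum_frac_eq (b n : ℕ) (hb : 0 < b) (c : ℕ → ℕ) :
    ∑ i ∈ Finset.range n, (c i : ℝ) * (b : ℝ) ^ (-(i + 1 : ℤ)) =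
      ((∑ i ∈ Finset.range n, c i * b ^ (n - 1 - i) : ℕ) : ℝ) / (b : ℝ) ^ n := by
  have hbne : (b : ℝ) ≠ 0 := by positivity
  push_cast
  rw [Finset.sum_div]
  apply Finset.sum_congr rfl
  intro i hi
  rw [Finset.mem_range] at hi
  rw [mul_div_assoc]
  congr 1
  rw [← zpow_natCast (b : ℝ) (n - 1 - i), ← zpow_natCast (b : ℝ) n, ← zpow_sub₀ hbne]
  congr 1
  omega


/-- The map `u ↦ x_u` is injective on non-root nodes of a plane tree. -/
theorem xVal_injective (t : PlaneTree) (p q : List ℕ)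
    (hp : IsNode t p) (hq : IsNode t q) (hp0 : p ≠ []) (hq0 : q ≠ [])
    (h : xVal t p = xVal t q) : p = q := by
  set b : ℕ := maxArity t + 2 with hbdef
  have hb : 0 < b := by omega
  -- bounds on the digits
  have hcb : ∀ (r : List ℕ), IsNode t r → ∀ i < r.length, cAt t r i < b := by
    intro r hr i hi
    have h1 := getD_lt_arityAt hr hi
    have h2 := arityAt_le_maxArity (isNode_take hr i)
    unfold cAt
    omega
  -- rewrite xVal as integer + N / b^n
  have hbr : ((b : ℕ) : ℝ) = (maxArity t : ℝ) + 2 := by push_cast [hbdef]; ring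
  have hx : ∀ (r : List ℕ), IsNode t r → xVal t r = (r.length : ℝ) +
      ((∑ i ∈ Finset.range r.length, cAt t r i * b ^ (r.length - 1 - i) : ℕ) : ℝ)
        / (b : ℝ) ^ r.length := by
    intro r hr
    rw [xVal, ← sum_frac_eq b r.length hb (cAt t r)]
    congr 1
    refine Finset.sum_congr rfl fun i _ => ?_
    rw [hbr]
  have hxp := hx p hp
  have hxq := hx q hq
  set Np : ℕ := ∑ i ∈ Finset.range p.length, cAt t p i * b ^ (p.length - 1 - i) with hNp
  set Nq : ℕ := ∑ i ∈ Finset.range q.length, cAt t q i * b ^ (q.length - 1 - i) with hNq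
  have hNplt : Np < b ^ p.length := sum_digits_lt hb _ _ (fun i hi => hcb p hp i hi)
  have hNqlt : Nq < b ^ q.length := sum_digits_lt hb _ _ (fun i hi => hcb q hq i hi)
  have hbpos : ∀ n : ℕ, (0 : ℝ) < (b : ℝ) ^ n := fun n => by positivity
  have hfr : ∀ (N n : ℕ), N < b ^ n → (0 : ℝ) ≤ (N : ℝ) / (b : ℝ) ^ n ∧
      (N : ℝ) / (b : ℝ) ^ n < 1 := by
    intro N n hN
    constructor
    · positivity
    · rw [div_lt_one (hbpos n)]
      exact_mod_cast hN
  obtain ⟨hfp0, hfp1⟩ := hfr Np p.length hNplt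
  obtain ⟨hfq0, hfq1⟩ := hfr Nq q.length hNqlt
  have hfloor : ∀ (k : ℕ) (f : ℝ), 0 ≤ f → f < 1 → ⌊(k : ℝ) + f⌋ = (k : ℤ) := by
    intro k f h0 h1
    rw [Int.floor_eq_iff]
    constructor
    · push_cast; linarith
    · push_cast; linarith
  have hlen : p.length = q.length := by
    have e1 : ⌊xVal t p⌋ = (p.length : ℤ) := by rw [hxp]; exact hfloor _ _ hfp0 hfp1
    have e2 : ⌊xVal t q⌋ = (q.length : ℤ) := by rw [hxq]; exact hfloor _ _ hfq0 hfq1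
    rw [h, e2] at e1
    exact_mod_cast e1.symm
  have hNeq : Np = Nq := by
    rw [hxp, hxq, hlen] at h
    have h2 : (Np : ℝ) / (b : ℝ) ^ q.length = (Nq : ℝ) / (b : ℝ) ^ q.length := by linarith
    field_simp at h2
    exact_mod_cast h2
  have hdig : ∀ i < p.length, cAt t p i = cAt t q i := by
    apply digits_eq hb p.length (cAt t p) (cAt t q)
      (fun i hi => hcb p hp i hi) (fun i hi => hcb q hq i (by omega))
    rw [← hNp, hlen, ← hNq]
    exact hNeq
  have hrec : ∀ i, i ≤ p.length → p.take i = q.take i := by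
    intro i
    induction i with
    | zero => intro _; simp
    | succ i ih =>
      intro hi
      have hi' : i < p.length := by omega
      have hiq : i < q.length := by omega
      have htk := ih (by omega)
      have h1 := getD_lt_arityAt hp hi'
      have h2 := getD_lt_arityAt hq hiq
      have hcc := hdig i hi'
      rw [htk] at h1
      unfold cAt at hcc
      rw [htk] at hcc
      have hgd : p.getD i 0 = q.getD i 0 := by omega
      rw [List.take_succ, List.take_succ, htk]
      congr 1
      rw [List.getElem?_eq_getElem hi', List.getElem?_eq_getElem hiq]
      have e1 : p.getD i 0 = p[i] := List.getD_eq_getElem _ _ hi'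
      have e2 : q.getD i 0 = q[i] := List.getD_eq_getElem _ _ hiq
      have : p[i] = q[i] := by omega
      rw [this]
  have hfin := hrec p.length (le_refl _)
  rw [List.take_length] at hfin
  rw [hlen, List.take_length] at hfin
  exact hfin
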